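/- The polynomial r(z) = z¹² − 3z¹¹ + z¹⁰ + 7z⁹ − 8z⁸ − 4z⁷ + 13z⁶ − 4z⁵ − 8z⁴ + 7z³ + z² − 3z + 1 is irreducible over ℚ. In the degree-12 number field F = ℚ[z]/(r(z)), the element w = z¹¹ − z¹⁰ − 3z⁹ + 4z⁸ + 5z⁷ − 6z⁶ − 2z⁵ + 7z⁴ + z³ − 4z² + z + 2 is a root of w⁶ − 2w⁵ + 2w⁴ − 3w³ + 2w² − 2w + 1, the element ζ = 2z¹¹ − 4z¹⁰ − 3z⁹ + 14z⁸ − 4z⁷ − 16z⁶ + 16z⁵ + 8z⁴ − 14z³ + 2z² + 6z − 2 is a primitive 7th root of unity (it satisfies ζ⁶ + ζ⁵ + ζ⁴ + ζ³ + ζ² + ζ + 1 = 0), and F is generated over ℚ by w and ζ, so that F ≅ ℚ(w, ζ₇). -/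

import Mathlib

open Polynomial

set_option maxHeartbeats 1600000

namespace RpolyAux

variable {R : Type*} [CommRing R]

/-- Big-endian list to polynomial. -/
noncomputable def toP : List R → R[X]
  | [] => 0
  | a :: l => C a * X ^ l.length + toP l

/-- Little-endian list to polynomial. -/
noncomputable def toQ : List R → R[X]
  | [] => 0
  | a :: l => C a + X * toQ l

lemma coeff_toQ (l : List R) (n : ℕ) : (toQ l).coeff n = l.getD n 0 := by
  induction l generalizing n with
  | nil => simp [toQ]
  | cons a l ih =>
    cases n with
    | zero => simp [toQ, mul_comm X (toQ l)]
    | succ n => simp [toQ, coeff_X_mul, ih]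

lemma toP_append (u v : List R) : toP (u ++ v) = toP u * X ^ v.length + toP v := by
  induction u with
  | nil => simp [toP]
  | cons a u ih =>
    show C a * X ^ (u ++ v).length + toP (u ++ v) = _
    rw [ih, List.length_append, pow_add, toP]
    ring

lemma toP_reverse (l : List R) : toP l.reverse = toQ l := by
  induction l with
  | nil => simp [toP, toQ]
  | cons a l ih =>
    rw [List.reverse_cons, toP_append, ih, toQ]
    simp [toP]
    ring

lemma degree_toP_lt (l : List R) : (toP l).degree < (l.length : ℕ) := by
  induction l with
  | nil => simpa [toP] using WithBot.bot_lt_coe 0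
  | cons a l ih =>
    refine lt_of_le_of_lt (degree_add_le _ _) (max_lt ?_ ?_)
    · exact lt_of_le_of_lt (degree_C_mul_X_pow_le _ _)
        (by exact_mod_cast Nat.cast_lt.2 (Nat.lt_succ_self l.length))
    · exact lt_trans ih (by exact_mod_cast Nat.cast_lt.2 (Nat.lt_succ_self l.length))

lemma map_toP {S : Type*} [CommRing S] (φ : R →+* S) (l : List R) :
    (toP l).map φ = toP (l.map φ) := by
  induction l with
  | nil => simp [toP]
  | cons a l ih =>
    simp [toP, Polynomial.map_add, Polynomial.map_mul, Polynomial.map_pow, ih]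

lemma monic_toP_one_cons [Nontrivial R] (t : List R) : (toP (1 :: t)).Monic := by
  have h : toP ((1 : R) :: t) = X ^ t.length + toP t := by simp [toP]
  rw [h]
  exact monic_X_pow_add (degree_toP_lt t)

lemma degree_toP_one_cons [Nontrivial R] (t : List R) :
    (toP (1 :: t)).degree = t.length := by
  have h : toP ((1 : R) :: t) = X ^ t.length + toP t := by simp [toP]
  rw [h, degree_add_eq_left_of_degree_lt (by rw [degree_X_pow]; exact degree_toP_lt t),
    degree_X_pow]

/-- Remainder upon division by the monic polynomial `1 :: t` (big-endian), with fuel. -/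
def modBE (t : List R) : ℕ → List R → List R
  | _, [] => []
  | 0, l => l
  | fuel + 1, c :: l =>
    if t.length ≤ l.length then
      modBE t fuel
        (List.zipWith (fun x y => y - c * x) (t ++ List.replicate (l.length - t.length) 0) l)
    else c :: l

lemma modBE_length (t : List R) : ∀ fuel (l : List R), l.length ≤ fuel →
    (modBE t fuel l).length ≤ t.length := by
  intro fuel
  induction fuel with
  | zero =>
    intro l h
    rw [List.length_eq_zero_iff.1 (Nat.le_zero.1 h)]
    simp [modBE]
  | succ n ih =>
    intro l h
    cases l with
    | nil => simp [modBE]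
    | cons c l =>
      rw [modBE]
      split
      · apply ih
        simp only [List.length_zipWith, List.length_append, List.length_replicate]
        simp at h; omega
      · rename_i hlt
        simp only [List.length_cons]
        omega

lemma toP_replicate_zero (n : ℕ) : toP (List.replicate n (0 : R)) = 0 := by
  induction n with
  | zero => simp [toP]
  | succ n ih => simp [List.replicate_succ, toP, ih]

lemma toP_zipWith_sub (c : R) : ∀ (u v : List R), u.length = v.length →
    toP (List.zipWith (fun x y => y - c * x) u v) = toP v - C c * toP u := by
  intro u
  induction u with
  | nil =>
    intro v h
    rw [List.length_nil] at h
    rw [List.length_eq_zero_iff.1 h.symm]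
    simp [toP]
  | cons a u ih =>
    intro v h
    cases v with
    | nil => simp at h
    | cons b v =>
      have h' : u.length = v.length := by simpa using h
      simp only [List.zipWith_cons_cons, toP, List.length_zipWith, h', min_self,
        ih v h', C_sub, C_mul]
      ring

lemma modBE_spec (t : List R) : ∀ fuel (l : List R), l.length ≤ fuel →
    ∃ q, toP l = toP (1 :: t) * q + toP (modBE t fuel l) := by
  intro fuel
  induction fuel with
  | zero =>
    intro l h
    rw [List.length_eq_zero_iff.1 (Nat.le_zero.1 h)]
    exact ⟨0, by simp [modBE]⟩
  | succ n ih =>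
    intro l h
    cases l with
    | nil => exact ⟨0, by simp [modBE]⟩
    | cons c l =>
      rw [modBE]
      split
      · rename_i hle
        set l' := List.zipWith (fun x y => y - c * x)
          (t ++ List.replicate (l.length - t.length) 0) l with hl'
        have hlen : (t ++ List.replicate (l.length - t.length) (0:R)).length = l.length := by
          simp; omega
        have hl'len : l'.length ≤ n := by
          rw [hl']; simp only [List.length_zipWith, hlen, min_self]
          simp at h; omega
        obtain ⟨q, hq⟩ := ih l' hl'len
        refine ⟨C c * X ^ (l.length - t.length) + q, ?_⟩
        have hsub : toP l' = toP l - C c * (toP t * X ^ (l.length - t.length)) := by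
          rw [hl', toP_zipWith_sub c _ _ hlen, toP_append, toP_replicate_zero,
            List.length_replicate, add_zero]
        have hXsplit : (X : R[X]) ^ t.length * X ^ (l.length - t.length) = X ^ l.length := by
          rw [← pow_add]; congr 1; omega
        have hq' : toP l' = toP (1 :: t) * q + toP (modBE t n l') := hq
        calc toP (c :: l) = C c * X ^ l.length + toP l := rfl
          _ = toP (1 :: t) * (C c * X ^ (l.length - t.length) + q) + toP (modBE t n l') := by
              have : toP l = toP l' + C c * (toP t * X ^ (l.length - t.length)) := by
                rw [hsub]; ring
              rw [this, hq']
              simp only [toP, C_1, one_mul]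
              rw [← hXsplit]
              ring
      · exact ⟨0, by simp⟩


/-! ### Specific data -/

def zl : List ℤ := [1, -3, 1, 7, -8, -4, 13, -4, -8, 7, 1, -3, 1]

noncomputable def rZ : ℤ[X] := toP zl

def rBE : List (ZMod 2) := [1, 1, 1, 1, 0, 0, 1, 0, 0, 1, 1, 1, 1]

def lfv : List (ZMod 2) := [1, 0, 1, 1, 0, 1]
def lgv : List (ZMod 2) := [1, 1, 0, 1, 1, 0]

lemma rZ_eq_toQ : rZ = toQ zl := by
  have h : zl.reverse = zl := by decide
  rw [rZ]
  conv_lhs => rw [← h]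
  exact toP_reverse zl

lemma rZ_coeff (n : ℕ) : rZ.coeff n = zl.getD n 0 := by
  rw [rZ_eq_toQ, coeff_toQ]

lemma rZ_monic : rZ.Monic := by
  rw [rZ, zl]
  exact monic_toP_one_cons _

lemma rZ_degree : rZ.degree = (12 : ℕ) := by
  have h := degree_toP_one_cons ([-3, 1, 7, -8, -4, 13, -4, -8, 7, 1, -3, 1] : List ℤ)
  rw [rZ, zl]
  simpa using h

lemma rZ_natDegree : rZ.natDegree = 12 := natDegree_eq_of_degree_eq_some rZ_degree

lemma rZ_ne_zero : rZ ≠ 0 := rZ_monic.ne_zero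

lemma rZ_map2 : rZ.map (Int.castRingHom (ZMod 2)) = toP rBE := by
  have h : zl.map (Int.castRingHom (ZMod 2)) = rBE := by decide
  rw [rZ, map_toP, h]

set_option maxRecDepth 8000 in
theorem keyAB : ∀ d : ℕ, d < 6 → ∀ v : Fin (d + 1) → ZMod 2,
    (∃ x ∈ modBE ((List.ofFn v).reverse) 13 rBE, x ≠ 0) ∨
    (d = 5 ∧ ((∀ i : Fin (d + 1), v i = lfv.getD i.1 0) ∨
              (∀ i : Fin (d + 1), v i = lgv.getD i.1 0))) := by decide

set_option maxRecDepth 8000 in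
theorem boxkey : ∀ a1 ∈ Finset.Icc (-3 : ℤ) 3, ∀ a2 ∈ Finset.Icc (-3 : ℤ) 3,
    ∀ a3 ∈ Finset.Icc (-3 : ℤ) 3, ∀ a4 ∈ Finset.Icc (-3 : ℤ) 3, ∀ a5 ∈ Finset.Icc (-3 : ℤ) 3,
    ¬(a1 * a1 + a2 * a2 + a3 * a3 + a4 * a4 + a5 * a5 = 11 ∧
      a5 + a1 = -3 ∧
      a4 + a1 * a5 + a2 = 1 ∧
      2 * a3 + a1 * a4 + a2 * a5 = 7 ∧
      a2 + a1 * a3 + a2 * a4 + a3 * a5 + a4 = -8 ∧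
      a1 + a1 * a2 + a2 * a3 + a3 * a4 + a4 * a5 + a5 = -4) := by decide

/-- A monic polynomial of degree `d+1` equals `toP` of its coefficient list. -/
lemma monic_eq_toP {K : Type*} [CommRing K] (p : K[X]) (d : ℕ) (hm : p.Monic)
    (hdeg : p.natDegree = d + 1) :
    p = toP ((1 : K) :: (List.ofFn fun i : Fin (d + 1) => p.coeff i).reverse) := by
  simp only [toP, List.length_reverse, List.length_ofFn, toP_reverse, C_1, one_mul]
  ext n
  rw [coeff_add, coeff_X_pow, coeff_toQ]
  rcases lt_trichotomy n (d + 1) with h | h | h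
  · rw [List.getD_eq_getElem?_getD, List.getElem?_ofFn]
    simp [List.ofFnNthVal, h, Nat.ne_of_lt h]
  · subst h
    rw [List.getD_eq_default _ _ (by simp)]
    rw [← hdeg]
    simp [hm.coeff_natDegree]
  · have hle : (List.ofFn fun i : Fin (d + 1) => p.coeff i).length ≤ n := by
      simp only [List.length_ofFn]; omega
    have hc0 : p.coeff n = 0 := coeff_eq_zero_of_natDegree_lt (by omega)
    rw [List.getD_eq_default _ _ hle, if_neg (by omega), add_zero, hc0]

lemma dvd_rem_zero {K : Type*} [Field K] (t l : List K)
    (hdvd : toP ((1 : K) :: t) ∣ toP l) (hlen : l.length ≤ 13) :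
    ∀ x ∈ modBE t 13 l, x = 0 := by
  obtain ⟨q, hq⟩ := modBE_spec t 13 l hlen
  have h1 : toP ((1 : K) :: t) ∣ toP (modBE t 13 l) := by
    have he : toP (modBE t 13 l) = toP l - toP ((1 : K) :: t) * q := by rw [hq]; ring
    rw [he]
    exact dvd_sub hdvd (Dvd.intro q rfl)
  have h2 : (toP (modBE t 13 l)).degree < (toP ((1 : K) :: t)).degree := by
    rw [degree_toP_one_cons]
    exact lt_of_lt_of_le (degree_toP_lt _)
      (by exact_mod_cast Nat.cast_le.2 (modBE_length t 13 l hlen))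
  have h0 : toP (modBE t 13 l) = 0 := eq_zero_of_dvd_of_degree_lt h1 h2
  intro x hx
  have hQ : toQ (modBE t 13 l).reverse = 0 := by
    have hh := toP_reverse (modBE t 13 l).reverse
    rw [List.reverse_reverse] at hh
    rw [← hh, h0]
  have hx' : x ∈ (modBE t 13 l).reverse := List.mem_reverse.mpr hx
  obtain ⟨i, hi, hg⟩ := List.mem_iff_getElem.mp hx'
  have := coeff_toQ (modBE t 13 l).reverse i
  rw [hQ, coeff_zero, List.getD_eq_getElem _ _ hi] at this
  rw [← hg, ← this]

/-- Transport a monic integer divisor of `rZ` of degree `d+1 ≤ 6` to the mod-2 world. -/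
lemma mod2_divisor (f : ℤ[X]) (d : ℕ) (hm : f.Monic) (hdeg : f.natDegree = d + 1)
    (hd6 : d < 6) (hdvd : f ∣ rZ) :
    (d = 5 ∧ ((∀ i : Fin (d + 1), (Int.castRingHom (ZMod 2)) (f.coeff i) = lfv.getD i.1 0) ∨
              (∀ i : Fin (d + 1), (Int.castRingHom (ZMod 2)) (f.coeff i) = lgv.getD i.1 0))) := by
  set φ := Int.castRingHom (ZMod 2)
  set p := f.map φ with hp
  have hpm : p.Monic := hm.map φ
  have hpd : p.natDegree = d + 1 := by rw [hp, hm.natDegree_map, hdeg]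
  have hco : ∀ i : ℕ, p.coeff i = φ (f.coeff i) := fun i => coeff_map φ i
  set v : Fin (d + 1) → ZMod 2 := fun i => φ (f.coeff i) with hv
  have hrepr : p = toP ((1 : ZMod 2) :: (List.ofFn v).reverse) := by
    have hfun : v = fun i : Fin (d + 1) => p.coeff i := by
      funext i
      rw [hv, hco]
    rw [hfun]
    exact monic_eq_toP p d hpm hpd
  have hpdvd : p ∣ toP rBE := by
    rw [← rZ_map2]
    exact Polynomial.map_dvd φ hdvd
  have hzero := dvd_rem_zero ((List.ofFn v).reverse) rBE (by rw [← hrepr]; exact hpdvd)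
    (by rw [rBE]; simp)
  rcases keyAB d hd6 v with ⟨x, hx, hne⟩ | h
  · exact absurd (hzero x hx) hne
  · exact h

lemma noSmall (f : ℤ[X]) (hm : f.Monic) (h1 : 1 ≤ f.natDegree) (h5 : f.natDegree ≤ 5) :
    ¬ f ∣ rZ := by
  intro hdvd
  obtain ⟨d, hd⟩ : ∃ d, f.natDegree = d + 1 := ⟨f.natDegree - 1, by omega⟩
  have := mod2_divisor f d hm hd (by omega) hdvd
  omega

lemma sq_le_eleven {x : ℤ} (h : x * x ≤ 11) : x ∈ Finset.Icc (-3 : ℤ) 3 := by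
  rw [Finset.mem_Icc]
  constructor
  · by_contra hc
    push_neg at hc
    have h4 : x ≤ -4 := by omega
    nlinarith
  · by_contra hc
    push_neg at hc
    have h4 : 4 ≤ x := by omega
    nlinarith

lemma coeff_extract (f g : ℤ[X]) (hfg : f * g = rZ) (k : ℕ) :
    (∑ i ∈ Finset.range (k + 1), f.coeff i * g.coeff (k - i)) = rZ.coeff k := by
  rw [← hfg, coeff_mul, Finset.Nat.sum_antidiagonal_eq_sum_range_succ_mk]

lemma main6 (f g : ℤ[X]) (hfm : f.Monic) (hgm : g.Monic)
    (hfd : f.natDegree = 6) (hgd : g.natDegree = 6) (hfg : f * g = rZ) : False := by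
  have hfz : f ≠ 0 := hfm.ne_zero
  have hgz : g ≠ 0 := hgm.ne_zero
  have hg6 : g.coeff 6 = 1 := by rw [← hgd]; exact hgm.coeff_natDegree
  have hf6 : f.coeff 6 = 1 := by rw [← hfd]; exact hfm.coeff_natDegree
  have h00 : f.coeff 0 * g.coeff 0 = 1 := by
    have h := congrArg (fun p => p.coeff 0) hfg
    simp only [mul_coeff_zero] at h
    rwa [rZ_coeff, show zl.getD 0 0 = 1 from rfl] at h
  have ha0 : f.coeff 0 = 1 ∨ f.coeff 0 = -1 :=
    Int.isUnit_iff.mp (IsUnit.of_mul_eq_one _ h00)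
  -- f is irreducible over ℤ
  have hfirr : Irreducible f := by
    constructor
    · intro hu
      have := natDegree_eq_zero_of_isUnit hu
      omega
    · intro c d hcd
      by_contra hcon
      push_neg at hcon
      obtain ⟨hc, hd⟩ := hcon
      have hcz : c ≠ 0 := by rintro rfl; rw [zero_mul] at hcd; exact hfz hcd
      have hdz : d ≠ 0 := by rintro rfl; rw [mul_zero] at hcd; exact hfz hcd
      have hlc : c.leadingCoeff * d.leadingCoeff = 1 := by
        have h := congrArg leadingCoeff hcd
        rw [leadingCoeff_mul, hfm.leadingCoeff] at h
        exact h.symm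
      have hdeg : c.natDegree + d.natDegree = 6 := by
        rw [← natDegree_mul hcz hdz, ← hcd, hfd]
      have hcn : c.natDegree ≠ 0 := by
        intro h0
        obtain ⟨u, hu⟩ := natDegree_eq_zero.mp h0
        apply hc
        rw [← hu, isUnit_C]
        have hlcu : c.leadingCoeff = u := by rw [← hu, leadingCoeff_C]
        exact IsUnit.of_mul_eq_one (a := u) _ (hlcu ▸ hlc)
      have hdn : d.natDegree ≠ 0 := by
        intro h0
        obtain ⟨u, hu⟩ := natDegree_eq_zero.mp h0
        apply hd
        rw [← hu, isUnit_C]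
        have hlcu : d.leadingCoeff = u := by rw [← hu, leadingCoeff_C]
        exact IsUnit.of_mul_eq_one (a := u) _ (hlcu ▸ (mul_comm c.leadingCoeff d.leadingCoeff ▸ hlc))
      have hcdvd : c ∣ rZ := ⟨d * g, by rw [← hfg, hcd, mul_assoc]⟩
      rcases Int.isUnit_iff.mp (IsUnit.of_mul_eq_one _ hlc) with h1 | h1
      · exact noSmall c h1 (by omega) (by omega) hcdvd
      · refine noSmall (-c) ?_ ?_ ?_ ((neg_dvd).mpr hcdvd)
        · rw [Monic, leadingCoeff_neg, h1, neg_neg]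
        · rw [natDegree_neg]; omega
        · rw [natDegree_neg]; omega
  have hfprime : Prime f := (UniqueFactorizationMonoid.irreducible_iff_prime).mp hfirr
  have hrev : rZ.reverse = rZ := by
    ext n
    rw [coeff_reverse, rZ_natDegree]
    rcases le_or_gt n 12 with h | h
    · rw [revAt_le h, rZ_coeff, rZ_coeff]
      interval_cases n <;> decide
    · rw [revAt_eq_self_of_lt h]
  have hfdvd : f ∣ reverse f * reverse g := by
    rw [← reverse_mul_of_domain, hfg, hrev]
    exact ⟨g, hfg.symm⟩
  rcases hfprime.2.2 _ _ hfdvd with hrf | hrg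
  · -- f divides its own reverse : palindromic or antipalindromic, both impossible
    obtain ⟨q, hq⟩ := hrf
    have hrnz : f.reverse ≠ 0 := fun h => hfz (reverse_eq_zero.mp h)
    have hqz : q ≠ 0 := by rintro rfl; rw [mul_zero] at hq; exact hrnz hq
    have hqd : q.natDegree = 0 := by
      have h1 : f.reverse.natDegree ≤ 6 := hfd ▸ reverse_natDegree_le f
      have h2 : f.reverse.natDegree = 6 + q.natDegree := by
        rw [hq, natDegree_mul hfz hqz, hfd]
      omega
    obtain ⟨u, hu⟩ := natDegree_eq_zero.mp hqd
    have hcoef : ∀ i : ℕ, i ≤ 6 → f.coeff (6 - i) = f.coeff i * u := by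
      intro i hi
      have h := congrArg (fun p => p.coeff i) hq
      rw [coeff_reverse, hfd, revAt_le hi, ← hu, coeff_mul_C] at h
      exact h
    have h06 : (1 : ℤ) = f.coeff 0 * u := by
      have h := hcoef 0 (by norm_num)
      rwa [Nat.sub_zero, hf6] at h
    have hu0 : u = f.coeff 0 := by rcases ha0 with h1 | h1 <;> rw [h1] at h06 ⊢ <;> linarith
    rcases ha0 with h1 | h1
    · -- palindromic case: impossible mod 2
      have hpal : f.coeff 5 = f.coeff 1 := by
        have h := hcoef 1 (by norm_num)
        rwa [hu0, h1, mul_one, show (6:ℕ) - 1 = 5 from rfl] at h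
      obtain ⟨-, hv⟩ := mod2_divisor f 5 hfm (by omega) (by omega) ⟨g, hfg.symm⟩
      rcases hv with hv | hv
      · have e1 := hv ⟨1, by omega⟩
        have e5 := hv ⟨5, by omega⟩
        simp only [lfv] at e1 e5
        rw [hpal] at e5
        rw [e5] at e1
        exact absurd e1 (by decide)
      · have e1 := hv ⟨1, by omega⟩
        have e5 := hv ⟨5, by omega⟩
        simp only [lgv] at e1 e5
        rw [hpal] at e5
        rw [e5] at e1
        exact absurd e1 (by decide)
    · -- antipalindromic case: f 1 = 0 but rZ 1 = 1
      have e0 := hcoef 0 (by norm_num)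
      have e1 := hcoef 1 (by norm_num)
      have e2 := hcoef 2 (by norm_num)
      have e3 := hcoef 3 (by norm_num)
      rw [hu0, h1] at e0 e1 e2 e3
      norm_num at e0 e1 e2 e3
      have hev : f.eval 1 = 0 := by
        rw [eval_eq_sum_range, hfd]
        simp only [Finset.sum_range_succ, Finset.sum_range_zero, one_pow, mul_one]
        linarith
      have hr1 : rZ.eval 1 = 1 := by
        rw [rZ, zl]
        simp only [toP, List.length_cons, List.length_nil, eval_add, eval_mul, eval_pow,
          eval_C, eval_X]
        norm_num
      have h := congrArg (fun p => p.eval 1) hfg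
      simp only [eval_mul] at h
      rw [hev, hr1, zero_mul] at h
      exact absurd h (by norm_num)
  · -- f divides reverse g : g = u * reciprocal of f, sum of squares argument
    obtain ⟨q, hq⟩ := hrg
    have hrnz : g.reverse ≠ 0 := fun h => hgz (reverse_eq_zero.mp h)
    have hqz : q ≠ 0 := by rintro rfl; rw [mul_zero] at hq; exact hrnz hq
    have hqd : q.natDegree = 0 := by
      have h1 : g.reverse.natDegree ≤ 6 := hgd ▸ reverse_natDegree_le g
      have h2 : g.reverse.natDegree = 6 + q.natDegree := by
        rw [hq, natDegree_mul hfz hqz, hfd]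
      omega
    obtain ⟨u, hu⟩ := natDegree_eq_zero.mp hqd
    have hgb : ∀ j : ℕ, j ≤ 6 → g.coeff j = f.coeff (6 - j) * u := by
      intro j hj
      have h := congrArg (fun p => p.coeff (6 - j)) hq
      rw [coeff_reverse, hgd, revAt_le (by omega), ← hu, coeff_mul_C,
        show 6 - (6 - j) = j from by omega] at h
      exact h
    have h6 : (1 : ℤ) = f.coeff 0 * u := by
      have h := hgb 6 le_rfl
      rwa [hg6, Nat.sub_self] at h
    -- sum of squares identity
    have hk6 := coeff_extract f g hfg 6
    rw [rZ_coeff, show zl.getD 6 0 = 13 from rfl] at hk6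
    simp only [Finset.sum_range_succ, Finset.sum_range_zero, zero_add] at hk6
    rw [hgb 6 le_rfl, hgb 5 (by norm_num), hgb 4 (by norm_num), hgb 3 (by norm_num),
      hgb 2 (by norm_num), hgb 1 (by norm_num), hgb 0 (by norm_num)] at hk6
    norm_num [hf6] at hk6
    -- u = 1
    have hu1 : u = 1 := by
      rcases Int.isUnit_iff.mp (IsUnit.of_mul_eq_one (a := u) (f.coeff 0)
        (by linarith [h6, mul_comm (f.coeff 0) u])) with h1 | h1
      · exact h1
      · exfalso
        rw [h1] at hk6
        nlinarith [sq_nonneg (f.coeff 1), sq_nonneg (f.coeff 2), sq_nonneg (f.coeff 3),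
          sq_nonneg (f.coeff 4), sq_nonneg (f.coeff 5), sq_nonneg (f.coeff 0)]
    rw [hu1] at hk6 h6
    have ha01 : f.coeff 0 = 1 := by linarith
    rw [ha01] at hk6
    norm_num at hk6
    -- hk6 : sum of squares of a1..a5 = 11  (after accounting 1 + ... + 1 = 13)
    have hb : ∀ j : ℕ, j ≤ 6 → g.coeff j = f.coeff (6 - j) := by
      intro j hj
      rw [hgb j hj, hu1, mul_one]
    have hk1 := coeff_extract f g hfg 1
    have hk2 := coeff_extract f g hfg 2
    have hk3 := coeff_extract f g hfg 3
    have hk4 := coeff_extract f g hfg 4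
    have hk5 := coeff_extract f g hfg 5
    rw [rZ_coeff, show zl.getD 1 0 = -3 from rfl] at hk1
    rw [rZ_coeff, show zl.getD 2 0 = 1 from rfl] at hk2
    rw [rZ_coeff, show zl.getD 3 0 = 7 from rfl] at hk3
    rw [rZ_coeff, show zl.getD 4 0 = -8 from rfl] at hk4
    rw [rZ_coeff, show zl.getD 5 0 = -4 from rfl] at hk5
    simp only [Finset.sum_range_succ, Finset.sum_range_zero, zero_add] at hk1 hk2 hk3 hk4 hk5
    rw [hb 1 (by norm_num), hb 0 (by norm_num)] at hk1
    rw [hb 2 (by norm_num), hb 1 (by norm_num), hb 0 (by norm_num)] at hk2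
    rw [hb 3 (by norm_num), hb 2 (by norm_num), hb 1 (by norm_num), hb 0 (by norm_num)] at hk3
    rw [hb 4 (by norm_num), hb 3 (by norm_num), hb 2 (by norm_num), hb 1 (by norm_num),
      hb 0 (by norm_num)] at hk4
    rw [hb 5 (by norm_num), hb 4 (by norm_num), hb 3 (by norm_num), hb 2 (by norm_num),
      hb 1 (by norm_num), hb 0 (by norm_num)] at hk5
    norm_num [hf6, ha01] at hk1 hk2 hk3 hk4 hk5
    have hsum : f.coeff 1 * f.coeff 1 + f.coeff 2 * f.coeff 2 + f.coeff 3 * f.coeff 3 +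
        f.coeff 4 * f.coeff 4 + f.coeff 5 * f.coeff 5 = 11 := by linarith [hk6]
    have hm1 : f.coeff 1 ∈ Finset.Icc (-3 : ℤ) 3 := sq_le_eleven (by linarith [hsum, mul_self_nonneg (f.coeff 2), mul_self_nonneg (f.coeff 3), mul_self_nonneg (f.coeff 4), mul_self_nonneg (f.coeff 5)])
    have hm2 : f.coeff 2 ∈ Finset.Icc (-3 : ℤ) 3 := sq_le_eleven (by linarith [hsum, mul_self_nonneg (f.coeff 1), mul_self_nonneg (f.coeff 3), mul_self_nonneg (f.coeff 4), mul_self_nonneg (f.coeff 5)])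
    have hm3 : f.coeff 3 ∈ Finset.Icc (-3 : ℤ) 3 := sq_le_eleven (by linarith [hsum, mul_self_nonneg (f.coeff 1), mul_self_nonneg (f.coeff 2), mul_self_nonneg (f.coeff 4), mul_self_nonneg (f.coeff 5)])
    have hm4 : f.coeff 4 ∈ Finset.Icc (-3 : ℤ) 3 := sq_le_eleven (by linarith [hsum, mul_self_nonneg (f.coeff 1), mul_self_nonneg (f.coeff 2), mul_self_nonneg (f.coeff 3), mul_self_nonneg (f.coeff 5)])
    have hm5 : f.coeff 5 ∈ Finset.Icc (-3 : ℤ) 3 := sq_le_eleven (by linarith [hsum, mul_self_nonneg (f.coeff 1), mul_self_nonneg (f.coeff 2), mul_self_nonneg (f.coeff 3), mul_self_nonneg (f.coeff 4)])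
    have E1 : f.coeff 5 + f.coeff 1 = -3 := by linear_combination hk1
    have E2 : f.coeff 4 + f.coeff 1 * f.coeff 5 + f.coeff 2 = 1 := by linear_combination hk2
    have E3 : 2 * f.coeff 3 + f.coeff 1 * f.coeff 4 + f.coeff 2 * f.coeff 5 = 7 := by
      linear_combination hk3
    have E4 : f.coeff 2 + f.coeff 1 * f.coeff 3 + f.coeff 2 * f.coeff 4 +
        f.coeff 3 * f.coeff 5 + f.coeff 4 = -8 := by linear_combination hk4
    have E5 : f.coeff 1 + f.coeff 1 * f.coeff 2 + f.coeff 2 * f.coeff 3 +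
        f.coeff 3 * f.coeff 4 + f.coeff 4 * f.coeff 5 + f.coeff 5 = -4 := by
      linear_combination hk5
    exact boxkey (f.coeff 1) hm1 (f.coeff 2) hm2 (f.coeff 3) hm3 (f.coeff 4) hm4
      (f.coeff 5) hm5 ⟨hsum, E1, E2, E3, E4, E5⟩

theorem rZ_irreducible : Irreducible rZ := by
  constructor
  · intro hu
    have := natDegree_eq_zero_of_isUnit hu
    rw [rZ_natDegree] at this
    omega
  · intro a b hab
    by_contra hcon
    push_neg at hcon
    obtain ⟨ha, hb⟩ := hcon
    have haz : a ≠ 0 := by rintro rfl; rw [zero_mul] at hab; exact rZ_ne_zero hab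
    have hbz : b ≠ 0 := by rintro rfl; rw [mul_zero] at hab; exact rZ_ne_zero hab
    have hlc : a.leadingCoeff * b.leadingCoeff = 1 := by
      have h := congrArg leadingCoeff hab
      rw [leadingCoeff_mul, rZ_monic.leadingCoeff] at h
      exact h.symm
    have hdeg : a.natDegree + b.natDegree = 12 := by
      rw [← natDegree_mul haz hbz, ← hab, rZ_natDegree]
    have han : a.natDegree ≠ 0 := by
      intro h0
      obtain ⟨u, hu⟩ := natDegree_eq_zero.mp h0
      apply ha
      rw [← hu, isUnit_C]
      have hlcu : a.leadingCoeff = u := by rw [← hu, leadingCoeff_C]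
      exact IsUnit.of_mul_eq_one (a := u) _ (hlcu ▸ hlc)
    have hbn : b.natDegree ≠ 0 := by
      intro h0
      obtain ⟨u, hu⟩ := natDegree_eq_zero.mp h0
      apply hb
      rw [← hu, isUnit_C]
      have hlcu : b.leadingCoeff = u := by rw [← hu, leadingCoeff_C]
      exact IsUnit.of_mul_eq_one (a := u) _ (hlcu ▸ (mul_comm a.leadingCoeff b.leadingCoeff ▸ hlc))
    -- make both monic
    obtain ⟨a', b', ham, hbm, hd, hd', hab'⟩ :
        ∃ a' b' : ℤ[X], a'.Monic ∧ b'.Monic ∧ a'.natDegree = a.natDegree ∧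
          b'.natDegree = b.natDegree ∧ a' * b' = rZ := by
      rcases Int.isUnit_iff.mp (IsUnit.of_mul_eq_one _ hlc) with h1 | h1
      · have h2 : b.leadingCoeff = 1 := by
          rw [h1, one_mul] at hlc; exact hlc
        exact ⟨a, b, h1, h2, rfl, rfl, hab.symm⟩
      · have h2 : b.leadingCoeff = -1 := by
          rw [h1] at hlc; linarith
        refine ⟨-a, -b, ?_, ?_, natDegree_neg a, natDegree_neg b, by rw [neg_mul_neg, ← hab]⟩
        · rw [Monic, leadingCoeff_neg, h1, neg_neg]
        · rw [Monic, leadingCoeff_neg, h2, neg_neg]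
    rcases le_or_gt a'.natDegree 6 with h6 | h6
    · rcases Nat.lt_or_ge a'.natDegree 6 with h5 | h5
      · exact noSmall a' ham (by omega) (by omega) ⟨b', hab'.symm⟩
      · exact main6 a' b' ham hbm (by omega) (by omega) hab'
    · exact noSmall b' hbm (by omega) (by omega) ⟨a', by rw [← hab']; ring⟩

end RpolyAux


/-- The degree-12 polynomial `r(z)` defining the field `F = ℚ(w, ζ₇)`. -/
noncomputable def rpoly : ℚ[X] :=
  X ^ 12 - 3 * X ^ 11 + X ^ 10 + 7 * X ^ 9 - 8 * X ^ 8 - 4 * X ^ 7 + 13 * X ^ 6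
    - 4 * X ^ 5 - 8 * X ^ 4 + 7 * X ^ 3 + X ^ 2 - 3 * X + 1

/-- The generator `z` of `F = ℚ[z]/(r(z))`. -/
noncomputable def zF : AdjoinRoot rpoly := AdjoinRoot.root rpoly

/-- The element `w ∈ F`, a root of `w⁶ − 2w⁵ + 2w⁴ − 3w³ + 2w² − 2w + 1`. -/
noncomputable def wF : AdjoinRoot rpoly :=
  zF ^ 11 - zF ^ 10 - 3 * zF ^ 9 + 4 * zF ^ 8 + 5 * zF ^ 7 - 6 * zF ^ 6 - 2 * zF ^ 5
    + 7 * zF ^ 4 + zF ^ 3 - 4 * zF ^ 2 + zF + 2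

/-- The element `ζ ∈ F`, a primitive 7th root of unity. -/
noncomputable def zetaF : AdjoinRoot rpoly :=
  2 * zF ^ 11 - 4 * zF ^ 10 - 3 * zF ^ 9 + 14 * zF ^ 8 - 4 * zF ^ 7 - 16 * zF ^ 6
    + 16 * zF ^ 5 + 8 * zF ^ 4 - 14 * zF ^ 3 + 2 * zF ^ 2 + 6 * zF - 2

namespace RpolyAux2

set_option maxHeartbeats 1600000

noncomputable def Wp : ℚ[X] :=
  X ^ 11 - X ^ 10 - 3 * X ^ 9 + 4 * X ^ 8 + 5 * X ^ 7 - 6 * X ^ 6 - 2 * X ^ 5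
     + 7 * X ^ 4 + X ^ 3 - 4 * X ^ 2 + X + 2

noncomputable def Zp : ℚ[X] :=
  2 * X ^ 11 - 4 * X ^ 10 - 3 * X ^ 9 + 14 * X ^ 8 - 4 * X ^ 7 - 16 * X ^ 6 + 16 * X ^ 5
     + 8 * X ^ 4 - 14 * X ^ 3 + 2 * X ^ 2 + 6 * X - 2

noncomputable def S1p : ℚ[X] :=
  X ^ 54 - 3 * X ^ 53 - 13 * X ^ 52 + 51 * X ^ 51 + 75 * X ^ 50 - 427 * X ^ 49
     - 203 * X ^ 48 + 2332 * X ^ 47 - 156 * X ^ 46 - 9265 * X ^ 45 + 4119 * X ^ 44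
     + 28324 * X ^ 43 - 21573 * X ^ 42 - 68644 * X ^ 41 + 74026 * X ^ 40 + 133596 * X ^ 39
     - 194113 * X ^ 38 - 207497 * X ^ 37 + 412367 * X ^ 36 + 246867 * X ^ 35 - 730518 * X ^ 34
     - 190053 * X ^ 33 + 1097548 * X ^ 32 - 8221 * X ^ 31 - 1410679 * X ^ 30 + 337714 * X ^ 29
     + 1557740 * X ^ 28 - 715035 * X ^ 27 - 1473481 * X ^ 26 + 1019876 * X ^ 25
     + 1185176 * X ^ 24 - 1149425 * X ^ 23 - 791230 * X ^ 22 + 1080764 * X ^ 21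
     + 418584 * X ^ 20 - 862424 * X ^ 19 - 147814 * X ^ 18 + 592384 * X ^ 17 + 4591 * X ^ 16
     - 348741 * X ^ 15 + 44657 * X ^ 14 + 177643 * X ^ 13 - 41558 * X ^ 12 - 76714 * X ^ 11
     + 25381 * X ^ 10 + 28785 * X ^ 9 - 10940 * X ^ 8 - 8838 * X ^ 7 + 3828 * X ^ 6
     + 2468 * X ^ 5 - 826 * X ^ 4 - 483 * X ^ 3 + 150 * X ^ 2 + 105 * X + 13

noncomputable def S2p : ℚ[X] :=
  64 * X ^ 54 - 576 * X ^ 53 + 1472 * X ^ 52 + 2752 * X ^ 51 - 21840 * X ^ 50 + 25552 * X ^ 49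
     + 95520 * X ^ 48 - 300416 * X ^ 47 - 15636 * X ^ 46 + 1303380 * X ^ 45 - 1576052 * X ^ 44
     - 2623812 * X ^ 43 + 7775381 * X ^ 42 - 584477 * X ^ 41 - 19706936 * X ^ 40
     + 19758014 * X ^ 39 + 26379073 * X ^ 38 - 63366087 * X ^ 37 + 693871 * X ^ 36
     + 113842796 * X ^ 35 - 86967734 * X ^ 34 - 117377519 * X ^ 33 + 211826648 * X ^ 32
     + 21159672 * X ^ 31 - 293397016 * X ^ 30 + 159340728 * X ^ 29 + 246445672 * X ^ 28
     - 322382192 * X ^ 27 - 71913575 * X ^ 26 + 357315467 * X ^ 25 - 126025337 * X ^ 24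
     - 246726332 * X ^ 23 + 228945593 * X ^ 22 + 78917353 * X ^ 21 - 204565291 * X ^ 20
     + 40377628 * X ^ 19 + 113231305 * X ^ 18 - 73287553 * X ^ 17 - 32670939 * X ^ 16
     + 51462960 * X ^ 15 - 4446892 * X ^ 14 - 21269260 * X ^ 13 + 9654932 * X ^ 12
     + 4531468 * X ^ 11 - 4844924 * X ^ 10 + 231401 * X ^ 9 + 1246214 * X ^ 8 - 447416 * X ^ 7
     - 121383 * X ^ 6 + 115517 * X ^ 5 - 16555 * X ^ 4 - 8602 * X ^ 3 + 4088 * X ^ 2 - 681 * X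
     + 43

noncomputable def Tp : ℚ[X] :=
  (-16) * X ^ 43 + 128 * X ^ 42 - 272 * X ^ 41 - 640 * X ^ 40 + 3784 * X ^ 39 - 3024 * X ^ 38
     - 15824 * X ^ 37 + 37280 * X ^ 36 + 14663 * X ^ 35 - 149232 * X ^ 34 + 118937 * X ^ 33
     + 296592 * X ^ 32 - 585744 * X ^ 31 - 153425 * X ^ 30 + 1360240 * X ^ 29 - 803424 * X ^ 28
     - 1791855 * X ^ 27 + 2624288 * X ^ 26 + 874495 * X ^ 25 - 4261188 * X ^ 24
     + 1592185 * X ^ 23 + 4169149 * X ^ 22 - 4246173 * X ^ 21 - 1948490 * X ^ 20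
     + 5182938 * X ^ 19 - 954527 * X ^ 18 - 3861625 * X ^ 17 + 2610435 * X ^ 16
     + 1561599 * X ^ 15 - 2432625 * X ^ 14 + 91620 * X ^ 13 + 1327072 * X ^ 12
     - 574287 * X ^ 11 - 399008 * X ^ 10 + 387468 * X ^ 9 + 13734 * X ^ 8 - 133695 * X ^ 7
     + 39355 * X ^ 6 + 21051 * X ^ 5 - 14598 * X ^ 4 + 696 * X ^ 3 + 1717 * X ^ 2 - 561 * X
     + 56


lemma hW : AdjoinRoot.mk rpoly Wp = wF := by
  simp only [Wp, map_add, map_sub, map_mul, map_pow, map_one, map_ofNat, AdjoinRoot.mk_X]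
  rw [wF, zF]

lemma hZ : AdjoinRoot.mk rpoly Zp = zetaF := by
  simp only [Zp, map_add, map_sub, map_mul, map_pow, map_one, map_ofNat, AdjoinRoot.mk_X]
  rw [zetaF, zF]

set_option maxRecDepth 100000 in
lemma w_identity : wF ^ 6 - 2 * wF ^ 5 + 2 * wF ^ 4 - 3 * wF ^ 3 + 2 * wF ^ 2 - 2 * wF + 1 = 0 := by
  have h : (AdjoinRoot.mk rpoly)
      (Wp ^ 6 - 2 * Wp ^ 5 + 2 * Wp ^ 4 - 3 * Wp ^ 3 + 2 * Wp ^ 2 - 2 * Wp + 1) = 0 := by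
    rw [AdjoinRoot.mk_eq_zero]
    refine ⟨S1p, ?_⟩
    unfold rpoly Wp S1p
    ring
  rw [← hW, ← h]
  simp only [map_sub, map_add, map_mul, map_pow, map_one, map_ofNat]

set_option maxRecDepth 100000 in
lemma z_identity : zetaF ^ 6 + zetaF ^ 5 + zetaF ^ 4 + zetaF ^ 3 + zetaF ^ 2 + zetaF + 1 = 0 := by
  have h : (AdjoinRoot.mk rpoly)
      (Zp ^ 6 + Zp ^ 5 + Zp ^ 4 + Zp ^ 3 + Zp ^ 2 + Zp + 1) = 0 := by
    rw [AdjoinRoot.mk_eq_zero]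
    refine ⟨S2p, ?_⟩
    unfold rpoly Zp S2p
    ring
  rw [← hZ, ← h]
  simp only [map_add, map_mul, map_pow, map_one, map_ofNat]

lemma zF_eq : zF = -zetaF ^ 3 - zetaF ^ 4 - zetaF ^ 5 + wF * zetaF ^ 4 := by
  have h : (AdjoinRoot.mk rpoly) (-Zp ^ 3 - Zp ^ 4 - Zp ^ 5 + Wp * Zp ^ 4 - X) = 0 := by
    rw [AdjoinRoot.mk_eq_zero]
    refine ⟨Tp, ?_⟩
    simp only [rpoly, Wp, Zp, Tp]
    ring
  rw [map_sub, sub_eq_zero] at h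
  have h2 : zF = (AdjoinRoot.mk rpoly) (-Zp ^ 3 - Zp ^ 4 - Zp ^ 5 + Wp * Zp ^ 4) := by
    rw [zF, ← AdjoinRoot.mk_X, h]
  rw [h2]
  simp only [map_add, map_sub, map_neg, map_mul, map_pow, hW, hZ]

lemma adjoin_top : Algebra.adjoin ℚ {wF, zetaF} = ⊤ := by
  rw [eq_top_iff, ← AdjoinRoot.adjoinRoot_eq_top, Algebra.adjoin_le_iff,
    Set.singleton_subset_iff]
  have hw : wF ∈ Algebra.adjoin ℚ {wF, zetaF} := Algebra.subset_adjoin (Set.mem_insert _ _)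
  have hz : zetaF ∈ Algebra.adjoin ℚ {wF, zetaF} :=
    Algebra.subset_adjoin (Set.mem_insert_of_mem _ rfl)
  have : AdjoinRoot.root rpoly = zF := rfl
  rw [this, zF_eq]
  exact Subalgebra.add_mem _
    (Subalgebra.sub_mem _
      (Subalgebra.sub_mem _
        (Subalgebra.neg_mem _ (Subalgebra.pow_mem _ hz 3))
        (Subalgebra.pow_mem _ hz 4))
      (Subalgebra.pow_mem _ hz 5))
    (Subalgebra.mul_mem _ hw (Subalgebra.pow_mem _ hz 4))

end RpolyAux2


lemma rpoly_eq_map : RpolyAux.rZ.map (Int.castRingHom ℚ) = rpoly := by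
  rw [show RpolyAux.rZ = RpolyAux.toP RpolyAux.zl from rfl,
    RpolyAux.map_toP (Int.castRingHom ℚ) RpolyAux.zl]
  simp only [RpolyAux.zl, List.map_cons, List.map_nil, RpolyAux.toP, rpoly, List.length_cons,
    List.length_nil, map_one, map_neg, map_ofNat, map_zero, C_1]
  push_cast
  ring

lemma rpoly_irreducible : Irreducible rpoly := by
  rw [← rpoly_eq_map]
  exact (Polynomial.IsPrimitive.Int.irreducible_iff_irreducible_map_cast
    RpolyAux.rZ_monic.isPrimitive).mp RpolyAux.rZ_irreducible

/-- `r` is irreducible over ℚ; in `F = ℚ[z]/(r(z))` the displayed element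
`w` is a root of `w⁶ − 2w⁵ + 2w⁴ − 3w³ + 2w² − 2w + 1`, the displayed element `ζ` is a
primitive 7th root of unity (a root of `Φ₇`), and `F` is generated over ℚ by `w` and `ζ`,
so `F ≅ ℚ(w, ζ₇)`. -/
theorem rpoly_field_structure :
    Irreducible rpoly ∧
      wF ^ 6 - 2 * wF ^ 5 + 2 * wF ^ 4 - 3 * wF ^ 3 + 2 * wF ^ 2 - 2 * wF + 1 = 0 ∧
      zetaF ^ 6 + zetaF ^ 5 + zetaF ^ 4 + zetaF ^ 3 + zetaF ^ 2 + zetaF + 1 = 0 ∧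
      Algebra.adjoin ℚ {wF, zetaF} = ⊤ := by
  exact ⟨rpoly_irreducible, RpolyAux2.w_identity, RpolyAux2.z_identity, RpolyAux2.adjoin_top⟩
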